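/- (Olsson's theorem) If s and t are coprime positive integers and λ is an s-core, then the t-core of λ is also an s-core. -/

import Mathlib

open Classical

/-- A partition: an infinite weakly decreasing sequence of non-negative integers
with finite sum.  Here `f n` denotes the part `λ_{n+1}`. -/
structure Partition' where
  f : ℕ → ℕ
  antitone : ∀ ⦃m n : ℕ⦄, m ≤ n → f n ≤ f m
  eventually_zero : ∃ N, ∀ n, N ≤ n → f n = 0

instance : Inhabited Partition' :=
  ⟨⟨fun _ => 0, fun _ _ _ => le_rfl, ⟨0, fun _ _ => rfl⟩⟩⟩

namespace Partition'

/-- The beta-set `β_r(λ) = {λ_i - i + r : i ≥ 1}`. -/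
def beta (r : ℤ) (l : Partition') : Set ℤ :=
  {x | ∃ n : ℕ, x = (l.f n : ℤ) - (n + 1) + r}

/-- The size `|λ|` of a partition. -/
noncomputable def size (l : Partition') : ℕ := ∑ᶠ n, l.f n

/-- The partition whose beta-set (for some shift `r`) is `B`, if it exists. -/
noncomputable def ofBeta (B : Set ℤ) : Partition' :=
  if h : ∃ l : Partition', ∃ r : ℤ, beta r l = B then h.choose else default

/-- The beta-set of the `s`-core: beads pushed up their runners as far as possible.
A position `x` is occupied iff the number of beads of `B` weakly above it on its runner
exceeds the number of gaps strictly below it on its runner. -/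
def coreBeta (s : ℕ) (B : Set ℤ) : Set ℤ :=
  {x | ({y : ℤ | y ∉ B ∧ y ≡ x [ZMOD (s : ℤ)] ∧ y < x}).ncard
      < ({b : ℤ | b ∈ B ∧ b ≡ x [ZMOD (s : ℤ)] ∧ x ≤ b}).ncard}

/-- The `s`-core of a partition. -/
noncomputable def core (s : ℕ) (l : Partition') : Partition' :=
  ofBeta (coreBeta s (beta 0 l))

/-- `λ` is an `s`-core. -/
def IsCore (s : ℕ) (l : Partition') : Prop := core s l = l

/-- The `s`-weight of `λ`. -/
noncomputable def wt (s : ℕ) (l : Partition') : ℕ := (size l - size (core s l)) / s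

/-- The component of the `s`-quotient of `λ` indexed by `j : ZMod s`. -/
noncomputable def quot (s : ℕ) (l : Partition') (j : ZMod s) : Partition' :=
  ofBeta {z : ℤ | ((j.val : ℤ) + (s : ℤ) * z) ∈ beta 0 l}

/-- The `s`-set entry `Γ_j(λ)`: the smallest integer in the class `j` mod `s`
not lying in the beta-set of the `s`-core of `λ`. -/
noncomputable def sSet (s : ℕ) (l : Partition') (j : ZMod s) : ℤ :=
  sInf {x : ℤ | (x : ZMod s) = j ∧ x ∉ beta 0 (core s l)}

/-- `λ` is an `[s:t]`-core. -/
def IsGenCore (s t : ℕ) (l : Partition') : Prop :=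
  wt s (core t l) = wt s l

/-- The level `t` action of the generator `w_i` of the affine symmetric group `W_s` on `ℤ`. -/
def genActZ (s t : ℕ) (i : ZMod s) (n : ℤ) : ℤ :=
  if (n : ZMod s) = (i - 1) * (t : ZMod s) - ((((s : ℤ) - 1) * ((t : ℤ) - 1) / 2 : ℤ) : ZMod s)
    then n + t
  else if (n : ZMod s) = i * (t : ZMod s) - ((((s : ℤ) - 1) * ((t : ℤ) - 1) / 2 : ℤ) : ZMod s)
    then n - t
  else n

/-- The level `t` action of the generator `w_i` of `W_s` on partitions, via beta-sets. -/
noncomputable def genAct (s t : ℕ) (i : ZMod s) (l : Partition') : Partition' :=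
  ofBeta (genActZ s t i '' beta 0 l)

/-- The action of a word in the generators of `W_s`, at level `t`, on partitions. -/
noncomputable def wordAct (s t : ℕ) (w : List (ZMod s)) (l : Partition') : Partition' :=
  w.foldr (genAct s t) l

/-- `λ` and `μ` lie in the same orbit for the level `t` action of `W_s`. -/
def SameOrbit (s t : ℕ) (l m : Partition') : Prop :=
  ∃ w : List (ZMod s), wordAct s t w l = m

/-- `λ` and `μ` lie in the same orbit for the commuting actions of `W_s` (level `t`)
and `W_t` (level `s`). -/
def SameOrbit2 (s t : ℕ) (l m : Partition') : Prop :=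
  ∃ a : List (ZMod s), ∃ b : List (ZMod t), wordAct s t a (wordAct t s b l) = m

/-- The `t`-weighted `s`-quotient of `λ`: the multiset of pairs
`(Γ_i(λ) + tℤ, λ^(i))` over `i ∈ ℤ/sℤ`. -/
noncomputable def twq (s t : ℕ) (l : Partition') : Multiset (ZMod t × Partition') :=
  ((List.range s).map (fun i =>
    (((sSet s l (i : ZMod s) : ℤ) : ZMod t), quot s l (i : ZMod s))) : Multiset _)

/-- The largest `(s,t)`-core `κ_{s,t}`: the partition whose beta-set is the set of
integers not expressible as a non-negative integer combination of `s` and `t`. -/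
noncomputable def kappa (s t : ℕ) : Partition' :=
  ofBeta {x : ℤ | ¬ ∃ a b : ℕ, x = (a : ℤ) * s + (b : ℤ) * t}

end Partition'

namespace OlssonAux

def bdS (t : ℕ) (B : Set ℤ) (x : ℤ) : Set ℤ := {b : ℤ | b ∈ B ∧ b ≡ x [ZMOD (t : ℤ)] ∧ x ≤ b}
def gpS (t : ℕ) (B : Set ℤ) (x : ℤ) : Set ℤ := {y : ℤ | y ∉ B ∧ y ≡ x [ZMOD (t : ℤ)] ∧ y < x}

structure Adm (B : Set ℤ) : Prop where
  lo : ∃ a : ℤ, ∀ x ≤ a, x ∈ B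
  hi : ∃ b : ℤ, ∀ x ∈ B, x ≤ b

variable {t : ℕ} {B : Set ℤ}

lemma bdS_finite (hB : Adm B) (x : ℤ) : (bdS t B x).Finite := by
  obtain ⟨b, hb⟩ := hB.hi
  exact (Set.finite_Icc x b).subset fun y hy => ⟨hy.2.2, hb _ hy.1⟩

lemma gpS_finite (hB : Adm B) (x : ℤ) : (gpS t B x).Finite := by
  obtain ⟨a, ha⟩ := hB.lo
  refine (Set.finite_Icc a x).subset fun y hy => ⟨?_, hy.2.2.le⟩
  by_contra h
  exact hy.1 (ha _ (le_of_not_ge h))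

noncomputable def cc (t : ℕ) (B : Set ℤ) (x : ℤ) : ℤ :=
  ((bdS t B x).ncard : ℤ) - ((gpS t B x).ncard : ℤ)

lemma self_modEq_add (x : ℤ) (t : ℕ) : x ≡ x + t [ZMOD (t : ℤ)] :=
  Int.modEq_iff_dvd.mpr ⟨1, by ring⟩

lemma bdS_succ (hB : Adm B) (ht : 0 < t) (x : ℤ) :
    ((bdS t B x).ncard : ℤ) = (bdS t B (x + t)).ncard + (if x ∈ B then 1 else 0) := by
  have htz : (0 : ℤ) < t := Int.natCast_pos.mpr ht
  have h1 : bdS t B x = bdS t B (x + t) ∪ (if x ∈ B then {x} else ∅) := by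
    ext y
    simp only [bdS, Set.mem_setOf_eq, Set.mem_union]
    constructor
    · rintro ⟨hy, hmod, hle⟩
      rcases eq_or_lt_of_le hle with rfl | hlt
      · right
        rw [if_pos hy]; exact Set.mem_singleton _
      · left
        refine ⟨hy, hmod.trans (self_modEq_add x t), ?_⟩
        obtain ⟨k, hk⟩ := Int.modEq_iff_dvd.mp hmod.symm
        have hk1 : 1 ≤ k := by nlinarith
        nlinarith
    · rintro (⟨hy, hmod, hle⟩ | hy)
      · exact ⟨hy, hmod.trans (self_modEq_add x t).symm, by linarith⟩
      · split_ifs at hy with h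
        · rcases hy with rfl; exact ⟨h, Int.ModEq.refl _, le_rfl⟩
        · exact absurd hy (Set.notMem_empty y)
  rw [h1, Set.ncard_union_eq ?dj (bdS_finite hB _) ?fin]
  case dj =>
    refine Set.disjoint_left.mpr fun y hy hy2 => ?_
    split_ifs at hy2 with h
    · rcases hy2 with rfl; linarith [hy.2.2]
    · exact absurd hy2 (Set.notMem_empty y)
  case fin => split_ifs <;> simp
  split_ifs <;> simp

lemma gpS_succ (hB : Adm B) (ht : 0 < t) (x : ℤ) :
    ((gpS t B (x + t)).ncard : ℤ) = (gpS t B x).ncard + (if x ∈ B then 0 else 1) := by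
  have htz : (0 : ℤ) < t := Int.natCast_pos.mpr ht
  have h1 : gpS t B (x + t) = gpS t B x ∪ (if x ∈ B then ∅ else {x}) := by
    ext y
    simp only [gpS, Set.mem_setOf_eq, Set.mem_union]
    constructor
    · rintro ⟨hy, hmod, hlt⟩
      have hmod' : y ≡ x [ZMOD (t:ℤ)] := hmod.trans (self_modEq_add x t).symm
      rcases lt_or_ge y x with h | h
      · exact Or.inl ⟨hy, hmod', h⟩
      · rcases eq_or_lt_of_le h with rfl | hlt2
        · right
          rw [if_neg hy]; exact Set.mem_singleton _
        · exfalso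
          obtain ⟨k, hk⟩ := Int.modEq_iff_dvd.mp hmod'
          have : 1 ≤ -k := by nlinarith
          nlinarith
    · rintro (⟨hy, hmod, hlt⟩ | hy)
      · exact ⟨hy, hmod.trans (self_modEq_add x t), by linarith⟩
      · split_ifs at hy with h
        · exact absurd hy (Set.notMem_empty y)
        · rcases hy with rfl
          exact ⟨h, self_modEq_add _ t, by linarith⟩
  rw [h1, Set.ncard_union_eq ?dj (gpS_finite hB _) ?fin]
  case dj =>
    refine Set.disjoint_left.mpr fun y hy hy2 => ?_
    split_ifs at hy2 with h
    · exact absurd hy2 (Set.notMem_empty y)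
    · rcases hy2 with rfl; exact absurd hy.2.2 (lt_irrefl _)
  case fin => split_ifs <;> simp
  split_ifs <;> simp

lemma cc_succ (hB : Adm B) (ht : 0 < t) (x : ℤ) : cc t B (x + t) = cc t B x - 1 := by
  have h1 := bdS_succ hB ht x
  have h2 := gpS_succ hB ht x
  unfold cc
  split_ifs at h1 h2 <;> omega

lemma cc_add_nat (hB : Adm B) (ht : 0 < t) (x : ℤ) (k : ℕ) :
    cc t B (x + k * t) = cc t B x - k := by
  induction k with
  | zero => simp
  | succ n ih =>
      have : x + (n + 1 : ℕ) * t = (x + n * t) + t := by push_cast; ring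
      rw [this, cc_succ hB ht, ih]; push_cast; ring

lemma cc_sub_nat (hB : Adm B) (ht : 0 < t) (x : ℤ) (k : ℕ) :
    cc t B (x - k * t) = cc t B x + k := by
  have := cc_add_nat hB ht (x - k * t) k
  simp at this
  omega

/-- general shift along the runner -/
lemma cc_shift (hB : Adm B) (ht : 0 < t) (x : ℤ) (k : ℤ) :
    cc t B (x + k * t) = cc t B x - k := by
  rcases k.eq_nat_or_neg with ⟨n, rfl | rfl⟩
  · exact_mod_cast cc_add_nat hB ht x n
  · have : x + -(n : ℤ) * t = x - n * t := by ring
    rw [this, cc_sub_nat hB ht]; push_cast; ring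

/-- elements of the runner weakly above x -/
lemma runner_above (ht : 0 < t) {x y : ℤ} (hmod : y ≡ x [ZMOD (t:ℤ)]) (hle : x ≤ y) :
    ∃ k : ℕ, y = x + k * t := by
  obtain ⟨k, hk⟩ := Int.modEq_iff_dvd.mp hmod.symm
  have htz : (0:ℤ) < t := Int.natCast_pos.mpr ht
  have hk0 : 0 ≤ k := by nlinarith
  exact ⟨k.toNat, by rw [Int.toNat_of_nonneg hk0]; linarith⟩

lemma runner_below (ht : 0 < t) {x y : ℤ} (hmod : y ≡ x [ZMOD (t:ℤ)]) (hle : y < x) :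
    ∃ k : ℕ, 1 ≤ k ∧ y = x - k * t := by
  obtain ⟨k, hk⟩ := Int.modEq_iff_dvd.mp hmod
  have htz : (0:ℤ) < t := Int.natCast_pos.mpr ht
  have hk0 : 1 ≤ k := by nlinarith
  refine ⟨k.toNat, by omega, ?_⟩
  rw [Int.toNat_of_nonneg (by omega)]; linarith

lemma mem_coreBeta_iff (x : ℤ) :
    x ∈ Partition'.coreBeta t B ↔ 1 ≤ cc t B x := by
  show (gpS t B x).ncard < (bdS t B x).ncard ↔ _
  unfold cc; omega

lemma coreBeta_adm (hB : Adm B) (ht : 0 < t) : Adm (Partition'.coreBeta t B) := by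
  obtain ⟨a, ha⟩ := hB.lo
  obtain ⟨b, hb⟩ := hB.hi
  constructor
  · refine ⟨a, fun x hx => (mem_coreBeta_iff x).mpr ?_⟩
    have hgp : gpS t B x = ∅ := by
      ext y; simp only [gpS, Set.mem_setOf_eq, Set.mem_empty_iff_false, iff_false]
      rintro ⟨hy, -, hlt⟩; exact hy (ha _ (by linarith))
    have hbd : 0 < (bdS t B x).ncard :=
      (Set.ncard_pos (bdS_finite hB x)).mpr ⟨x, ⟨ha _ hx, Int.ModEq.refl _, le_rfl⟩⟩
    rw [cc, hgp]
    simp only [Set.ncard_empty]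
    omega
  · refine ⟨b, fun x hx => ?_⟩
    by_contra h
    have h1 := (mem_coreBeta_iff x).mp hx
    have hbd : bdS t B x = ∅ := by
      ext y; simp only [bdS, Set.mem_setOf_eq, Set.mem_empty_iff_false, iff_false]
      rintro ⟨hy, -, hle⟩; exact absurd (hb _ hy) (by push_neg at h ⊢; linarith)
    rw [cc, hbd] at h1
    simp at h1
    omega

/-- key invariance: cc of the core equals cc of B -/
lemma cc_coreBeta (hB : Adm B) (ht : 0 < t) (x : ℤ) :
    cc t (Partition'.coreBeta t B) x = cc t B x := by
  have htz : (0:ℤ) < t := Int.natCast_pos.mpr ht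
  have hbd : bdS t (Partition'.coreBeta t B) x =
      (fun k : ℕ => x + k * t) '' {k : ℕ | (k : ℤ) < cc t B x} := by
    ext y
    simp only [bdS, Set.mem_setOf_eq, Set.mem_image, mem_coreBeta_iff]
    constructor
    · rintro ⟨hy, hmod, hle⟩
      obtain ⟨k, rfl⟩ := runner_above ht hmod hle
      rw [cc_shift hB ht] at hy
      exact ⟨k, by omega, rfl⟩
    · rintro ⟨k, hk, rfl⟩
      refine ⟨?_, Int.modEq_iff_dvd.mpr ⟨-k, by ring⟩, by nlinarith⟩
      rw [cc_shift hB ht]; omega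
  have hgp : gpS t (Partition'.coreBeta t B) x =
      (fun k : ℕ => x - (k+1) * t) '' {k : ℕ | (k : ℤ) < -cc t B x} := by
    ext y
    simp only [gpS, Set.mem_setOf_eq, Set.mem_image, mem_coreBeta_iff]
    constructor
    · rintro ⟨hy, hmod, hlt⟩
      obtain ⟨k, hk1, rfl⟩ := runner_below ht hmod hlt
      rw [cc_sub_nat hB ht] at hy
      refine ⟨k - 1, by omega, ?_⟩
      have hc : ((k - 1 : ℕ) : ℤ) + 1 = k := by omega
      rw [hc]
    · rintro ⟨k, hk, rfl⟩
      refine ⟨?_, Int.modEq_iff_dvd.mpr ⟨(k+1 : ℕ), by push_cast; ring⟩, by nlinarith⟩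
      have h2 : x - ((k:ℤ) + 1) * t = x - ((k+1 : ℕ) : ℤ) * t := by push_cast; ring
      rw [h2, cc_sub_nat hB ht]
      push_cast
      omega
  have hinj1 : Function.Injective (fun k : ℕ => x + k * t) := by
    intro a b hab; simp only at hab
    have : (a : ℤ) * t = b * t := by linarith
    exact_mod_cast mul_right_cancel₀ (ne_of_gt htz) this
  have hinj2 : Function.Injective (fun k : ℕ => x - (k+1) * t) := by
    intro a b hab; simp only at hab
    have : ((a : ℤ) + 1) * t = ((b : ℤ) + 1) * t := by linarith
    have := mul_right_cancel₀ (ne_of_gt htz) this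
    exact_mod_cast by linarith
  rw [cc, hbd, hgp, Set.ncard_image_of_injective _ hinj1, Set.ncard_image_of_injective _ hinj2]
  have key : ∀ c : ℤ, {k : ℕ | (k : ℤ) < c}.ncard = c.toNat := by
    intro c
    have : {k : ℕ | (k : ℤ) < c} = ↑(Finset.range c.toNat) := by
      ext k; simp only [Set.mem_setOf_eq, Finset.coe_range, Set.mem_Iio]; omega
    rw [this, Set.ncard_coe_finset, Finset.card_range]
  rw [key, key]; omega

lemma coreBeta_mem_of_mem_sub (hB : Adm B) (ht : 0 < t) {x : ℤ}
    (hx : x ∈ Partition'.coreBeta t B) : x - t ∈ Partition'.coreBeta t B := by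
  rw [mem_coreBeta_iff] at hx ⊢
  have := cc_succ hB ht (x - t)
  simp only [sub_add_cancel] at this
  omega

lemma closed_mem_iter (hcl : ∀ x ∈ B, x - t ∈ B) {x : ℤ} (hx : x ∈ B) (k : ℕ) :
    x - k * t ∈ B := by
  induction k with
  | zero => simpa using hx
  | succ n ih =>
      have : x - ((n+1 : ℕ) : ℤ) * t = (x - n * t) - t := by push_cast; ring
      rw [this]
      exact hcl _ ih

lemma coreBeta_eq_of_closed (hB : Adm B) (ht : 0 < t) (hcl : ∀ x ∈ B, x - t ∈ B) :
    Partition'.coreBeta t B = B := by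
  ext x
  rw [mem_coreBeta_iff]
  constructor
  · intro h1
    by_contra hx
    have hbd : bdS t B x = ∅ := by
      ext y
      simp only [bdS, Set.mem_setOf_eq, Set.mem_empty_iff_false, iff_false]
      rintro ⟨hy, hmod, hle⟩
      obtain ⟨k, rfl⟩ := runner_above ht hmod hle
      have : x + k * t - k * t ∈ B := closed_mem_iter hcl hy k
      simp at this
      exact hx this
    rw [cc, hbd] at h1
    simp at h1
    omega
  · intro hx
    have hgp : gpS t B x = ∅ := by
      ext y
      simp only [gpS, Set.mem_setOf_eq, Set.mem_empty_iff_false, iff_false]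
      rintro ⟨hy, hmod, hlt⟩
      obtain ⟨k, hk1, rfl⟩ := runner_below ht hmod hlt
      exact hy (closed_mem_iter hcl hx k)
    have hbd : 0 < (bdS t B x).ncard :=
      (Set.ncard_pos (bdS_finite hB x)).mpr ⟨x, hx, Int.ModEq.refl _, le_rfl⟩
    rw [cc, hgp]
    simp only [Set.ncard_empty]
    omega

/-- The Olsson step: if `B` is closed under subtracting `s`, so is its `t`-core-set. -/
lemma coreBeta_closed_of_closed {s : ℕ} (hB : Adm B) (ht : 0 < t)
    (hcl : ∀ x ∈ B, x - s ∈ B) (x : ℤ) (hx : x ∈ Partition'.coreBeta t B) :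
    x - s ∈ Partition'.coreBeta t B := by
  rw [mem_coreBeta_iff] at hx ⊢
  have hbd : (bdS t B x).ncard ≤ (bdS t B (x - s)).ncard := by
    have himg : (fun b => b - (s:ℤ)) '' bdS t B x ⊆ bdS t B (x - s) := by
      rintro - ⟨b, ⟨hb, hmod, hle⟩, rfl⟩
      exact ⟨hcl _ hb, hmod.sub_right _, by show x - (s:ℤ) ≤ b - s; omega⟩
    calc (bdS t B x).ncard
        = ((fun b => b - (s:ℤ)) '' bdS t B x).ncard :=
          (Set.ncard_image_of_injective _ (fun a b h => by omega)).symm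
      _ ≤ _ := Set.ncard_le_ncard himg (bdS_finite hB _)
  have hgp : (gpS t B (x - s)).ncard ≤ (gpS t B x).ncard := by
    have himg : (fun y => y + (s:ℤ)) '' gpS t B (x - s) ⊆ gpS t B x := by
      rintro - ⟨y, ⟨hy, hmod, hlt⟩, rfl⟩
      refine ⟨fun hc => hy (by simpa using hcl _ hc), ?_, by show y + (s:ℤ) < x; omega⟩
      have := hmod.add_right (s:ℤ)
      simpa using this
    calc (gpS t B (x - s)).ncard
        = ((fun y => y + (s:ℤ)) '' gpS t B (x - s)).ncard :=
          (Set.ncard_image_of_injective _ (fun a b h => by omega)).symm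
      _ ≤ _ := Set.ncard_le_ncard himg (gpS_finite hB _)
  unfold cc at hx ⊢
  omega

/-- ncard of a pairwise disjoint finite union -/
lemma ncard_biUnion {ι : Type*} (s : Finset ι) (f : ι → Set ℤ)
    (hfin : ∀ i ∈ s, (f i).Finite)
    (hdisj : ∀ i ∈ s, ∀ j ∈ s, i ≠ j → Disjoint (f i) (f j)) :
    (⋃ i ∈ s, f i).ncard = ∑ i ∈ s, (f i).ncard := by
  classical
  induction s using Finset.induction with
  | empty => simp
  | @insert a s ha ih =>
      have hfin' : ∀ i ∈ s, (f i).Finite := fun i hi => hfin i (Finset.mem_insert_of_mem hi)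
      have hdisj' : ∀ i ∈ s, ∀ j ∈ s, i ≠ j → Disjoint (f i) (f j) := fun i hi j hj hij =>
        hdisj i (Finset.mem_insert_of_mem hi) j (Finset.mem_insert_of_mem hj) hij
      have hAfin : (⋃ i ∈ s, f i).Finite :=
        Set.Finite.biUnion (Finset.finite_toSet s) fun i hi => hfin' i hi
      have hdj : Disjoint (f a) (⋃ i ∈ s, f i) := by
        refine Set.disjoint_left.mpr fun y hy hy2 => ?_
        simp only [Set.mem_iUnion, exists_prop] at hy2
        obtain ⟨i, hi, hyi⟩ := hy2
        have hne : a ≠ i := by rintro rfl; exact ha hi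
        exact Set.disjoint_left.mp
          (hdisj a (Finset.mem_insert_self a s) i (Finset.mem_insert_of_mem hi) hne) hy hyi
      rw [Finset.set_biUnion_insert,
        Set.ncard_union_eq hdj (hfin a (Finset.mem_insert_self a s)) hAfin,
        ih hfin' hdisj', Finset.sum_insert ha]

/-- The charge of a set. -/
noncomputable def chg (S : Set ℤ) : ℤ :=
  ({y : ℤ | y ∈ S ∧ 0 ≤ y}.ncard : ℤ) - ({y : ℤ | y ∉ S ∧ y < 0}.ncard : ℤ)

lemma pos_finite (hB : Adm B) : {y : ℤ | y ∈ B ∧ 0 ≤ y}.Finite := by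
  obtain ⟨b, hb⟩ := hB.hi
  exact (Set.finite_Icc 0 b).subset fun y hy => ⟨hy.2, hb _ hy.1⟩

lemma neg_finite (hB : Adm B) : {y : ℤ | y ∉ B ∧ y < 0}.Finite := by
  obtain ⟨a, ha⟩ := hB.lo
  refine (Set.finite_Icc a 0).subset fun y hy => ⟨?_, hy.2.le⟩
  by_contra h
  exact hy.1 (ha _ (le_of_not_ge h))

lemma chg_eq_sum_cc (hB : Adm B) (ht : 0 < t) :
    chg B = ∑ j ∈ Finset.range t, cc t B (j : ℤ) := by
  have htz : (0:ℤ) < t := Int.natCast_pos.mpr ht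
  have hpos : {y : ℤ | y ∈ B ∧ 0 ≤ y} = ⋃ j ∈ Finset.range t, bdS t B (j : ℤ) := by
    ext y
    simp only [Set.mem_setOf_eq, Set.mem_iUnion, Finset.mem_range, exists_prop]
    constructor
    · rintro ⟨hy, hy0⟩
      refine ⟨(y % t).toNat, ?_, hy, ?_, ?_⟩
      · have := Int.emod_lt_of_pos y htz
        have := Int.emod_nonneg y (ne_of_gt htz)
        omega
      · have := Int.emod_nonneg y (ne_of_gt htz)
        rw [Int.toNat_of_nonneg this]
        exact (Int.emod_emod_of_dvd y dvd_rfl).symm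
      · have h2 := Int.emod_nonneg y (ne_of_gt htz)
        have h4 : 0 ≤ y / (t:ℤ) := Int.ediv_nonneg hy0 htz.le
        have h5 := Int.emod_add_mul_ediv y (t:ℤ)
        rw [Int.toNat_of_nonneg h2]
        nlinarith
    · rintro ⟨j, hj, hy, hmod, hle⟩
      exact ⟨hy, le_trans (by positivity) hle⟩
  have hneg : {y : ℤ | y ∉ B ∧ y < 0} = ⋃ j ∈ Finset.range t, gpS t B (j : ℤ) := by
    ext y
    simp only [Set.mem_setOf_eq, Set.mem_iUnion, Finset.mem_range, exists_prop]
    constructor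
    · rintro ⟨hy, hy0⟩
      refine ⟨(y % t).toNat, ?_, hy, ?_, ?_⟩
      · have := Int.emod_lt_of_pos y htz
        have := Int.emod_nonneg y (ne_of_gt htz)
        omega
      · have := Int.emod_nonneg y (ne_of_gt htz)
        rw [Int.toNat_of_nonneg this]
        exact (Int.emod_emod_of_dvd y dvd_rfl).symm
      · have := Int.emod_nonneg y (ne_of_gt htz)
        omega
    · rintro ⟨j, hj, hy, hmod, hlt⟩
      refine ⟨hy, ?_⟩
      obtain ⟨k, hk1, hk⟩ := runner_below ht hmod hlt
      have h1 : (1:ℤ) ≤ k := by exact_mod_cast hk1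
      have hjt : (j:ℤ) < t := by exact_mod_cast hj
      have hkt : (t:ℤ) ≤ k * t := le_mul_of_one_le_left htz.le h1
      linarith
  have hdisj : ∀ (F : ℕ → ℤ → Set ℤ),
      (∀ j x, F j x ⊆ {y | y ≡ x [ZMOD (t:ℤ)]}) → True := fun _ _ => trivial
  have key : ∀ i ∈ Finset.range t, ∀ j ∈ Finset.range t, i ≠ j →
      ∀ y : ℤ, y ≡ (i:ℤ) [ZMOD (t:ℤ)] → y ≡ (j:ℤ) [ZMOD (t:ℤ)] → False := by
    intro i hi j hj hij y hyi hyj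
    have : (i:ℤ) ≡ (j:ℤ) [ZMOD (t:ℤ)] := hyi.symm.trans hyj
    obtain ⟨k, hk⟩ := Int.modEq_iff_dvd.mp this
    simp only [Finset.mem_range] at hi hj
    have hit : (i:ℤ) < t := by exact_mod_cast hi
    have hjt : (j:ℤ) < t := by exact_mod_cast hj
    have hne : (i:ℤ) ≠ j := by exact_mod_cast hij
    have hk0 : k = 0 := by
      rcases lt_trichotomy k 0 with h|h|h
      · nlinarith [Int.natCast_nonneg i, Int.natCast_nonneg j]
      · exact h
      · nlinarith [Int.natCast_nonneg i, Int.natCast_nonneg j]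
    rw [hk0, mul_zero] at hk
    omega
  rw [chg, hpos, hneg,
    ncard_biUnion _ _ (fun i _ => bdS_finite hB _)
      (fun i hi j hj hij => Set.disjoint_left.mpr fun y hy1 hy2 =>
        key i hi j hj hij y hy1.2.1 hy2.2.1),
    ncard_biUnion _ _ (fun i _ => gpS_finite hB _)
      (fun i hi j hj hij => Set.disjoint_left.mpr fun y hy1 hy2 =>
        key i hi j hj hij y hy1.2.1 hy2.2.1)]
  push_cast
  rw [← Finset.sum_sub_distrib]
  rfl

lemma chg_coreBeta (hB : Adm B) (ht : 0 < t) :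
    chg (Partition'.coreBeta t B) = chg B := by
  rw [chg_eq_sum_cc (coreBeta_adm hB ht) ht, chg_eq_sum_cc hB ht]
  exact Finset.sum_congr rfl fun j _ => cc_coreBeta hB ht _

open Partition'

/-- the strictly decreasing enumeration of a beta-set -/
def gbeta (r : ℤ) (l : Partition') (n : ℕ) : ℤ := (l.f n : ℤ) - (n + 1) + r

lemma gbeta_strictAnti (r : ℤ) (l : Partition') : StrictAnti (gbeta r l) :=
  strictAnti_nat_of_succ_lt fun n => by
    have h1 : l.f (n+1) ≤ l.f n := l.antitone (Nat.le_succ n)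
    unfold gbeta; push_cast; omega

lemma range_gbeta (r : ℤ) (l : Partition') : Set.range (gbeta r l) = beta r l := by
  ext x
  simp only [Set.mem_range, beta, Set.mem_setOf_eq, gbeta, eq_comm]

lemma gbeta_eventually (r : ℤ) (l : Partition') :
    ∃ N : ℕ, ∀ n, N ≤ n → gbeta r l n = -(n + 1 : ℤ) + r := by
  obtain ⟨N, hN⟩ := l.eventually_zero
  exact ⟨N, fun n hn => by unfold gbeta; rw [hN n hn]; push_cast; ring⟩

lemma strictAnti_range_inj {g g' : ℕ → ℤ} (hg : StrictAnti g) (hg' : StrictAnti g')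
    (h : Set.range g = Set.range g') : g = g' := by
  have h2 : Set.range (fun n => -g n) = Set.range (fun n => -g' n) := by
    ext x
    simp only [Set.mem_range]
    constructor
    · rintro ⟨n, hn⟩
      have : g n ∈ Set.range g' := h ▸ Set.mem_range_self n
      obtain ⟨m, hm⟩ := this
      exact ⟨m, by omega⟩
    · rintro ⟨n, hn⟩
      have : g' n ∈ Set.range g := h ▸ Set.mem_range_self n
      obtain ⟨m, hm⟩ := this
      exact ⟨m, by omega⟩
  have hmono : StrictMono (fun n => -g n) := fun a b hab => by
    simp only [neg_lt_neg_iff]; exact hg hab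
  have hmono' : StrictMono (fun n => -g' n) := fun a b hab => by
    simp only [neg_lt_neg_iff]; exact hg' hab
  have := (StrictMono.range_inj hmono hmono').mp h2
  funext n
  have := congrFun this n
  omega

lemma partition_ext {l l' : Partition'} (h : l.f = l'.f) : l = l' := by
  cases l; cases l'
  simp only at h
  subst h
  rfl

lemma beta_inj {r r' : ℤ} {l l' : Partition'} (h : beta r l = beta r' l') : l = l' := by
  have hg : gbeta r l = gbeta r' l' :=
    strictAnti_range_inj (gbeta_strictAnti r l) (gbeta_strictAnti r' l')
      (by rw [range_gbeta, range_gbeta, h])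
  obtain ⟨N, hN⟩ := gbeta_eventually r l
  obtain ⟨N', hN'⟩ := gbeta_eventually r' l'
  have hrr : r = r' := by
    have h1 := hN (max N N') (le_max_left _ _)
    have h2 := hN' (max N N') (le_max_right _ _)
    have h3 := congrFun hg (max N N')
    omega
  apply partition_ext
  funext n
  have h3 := congrFun hg n
  unfold gbeta at h3
  omega

lemma ofBeta_beta (r : ℤ) (l : Partition') : ofBeta (beta r l) = l := by
  have h : ∃ l' : Partition', ∃ r' : ℤ, beta r' l' = beta r l := ⟨l, r, rfl⟩
  rw [ofBeta, dif_pos h]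
  obtain ⟨r', hr'⟩ := h.choose_spec
  exact beta_inj hr'

lemma adm_beta (l : Partition') : Adm (beta 0 l) := by
  obtain ⟨N, hN⟩ := gbeta_eventually 0 l
  constructor
  · refine ⟨-(N + 1 : ℤ), fun x hx => ?_⟩
    rw [← range_gbeta]
    refine ⟨(-x - 1).toNat, ?_⟩
    have h1 : (N : ℤ) ≤ (-x - 1) := by omega
    have h2 : ((-x - 1).toNat : ℤ) = -x - 1 := Int.toNat_of_nonneg (by omega)
    rw [hN _ (by omega)]
    omega
  · refine ⟨(l.f 0 : ℤ), fun x hx => ?_⟩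
    rw [← range_gbeta] at hx
    obtain ⟨n, rfl⟩ := hx
    have h1 : gbeta 0 l n ≤ gbeta 0 l 0 := (gbeta_strictAnti 0 l).antitone (Nat.zero_le n)
    unfold gbeta at h1 ⊢
    omega

lemma ncard_Iio_nat (n : ℕ) : (Set.Iio n).ncard = n := by
  have : (Set.Iio n) = ↑(Finset.range n) := by ext; simp
  rw [this, Set.ncard_coe_finset, Finset.card_range]

/-- charge of the range of a "eventually trivial" strictly decreasing enumeration -/
lemma chg_of_enum {g : ℕ → ℤ} (hg : StrictAnti g) {N : ℕ}
    (hN : ∀ n, N ≤ n → g n = -(n + 1 : ℤ)) : chg (Set.range g) = 0 := by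
  set A : Set ℕ := {n | 0 ≤ g n} with hA
  set Ac : Set ℕ := {n | n < N ∧ g n < 0} with hAc
  have hAsub : A ⊆ Set.Iio N := by
    intro n hn
    simp only [hA, Set.mem_setOf_eq] at hn
    simp only [Set.mem_Iio]
    by_contra hc
    have h2 := hN n (by omega)
    omega
  have hAfin : A.Finite := (Set.finite_Iio N).subset hAsub
  have hAcfin : Ac.Finite := (Set.finite_Iio N).subset fun n hn => hn.1
  have hpos : {y : ℤ | y ∈ Set.range g ∧ 0 ≤ y} = g '' A := by
    ext y
    simp only [Set.mem_setOf_eq, Set.mem_range, Set.mem_image, hA]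
    constructor
    · rintro ⟨⟨n, rfl⟩, h0⟩; exact ⟨n, h0, rfl⟩
    · rintro ⟨n, h0, rfl⟩; exact ⟨⟨n, rfl⟩, h0⟩
  have hIoo : Set.Ioo (-(N : ℤ) - 1) 0 = {y : ℤ | y ∉ Set.range g ∧ y < 0} ∪ g '' Ac := by
    ext y
    simp only [Set.mem_Ioo, Set.mem_union, Set.mem_setOf_eq, Set.mem_image, hAc]
    constructor
    · rintro ⟨hy1, hy2⟩
      by_cases hy : y ∈ Set.range g
      · obtain ⟨n, rfl⟩ := hy
        right
        refine ⟨n, ⟨?_, hy2⟩, rfl⟩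
        by_contra hc
        have := hN n (by omega)
        omega
      · exact Or.inl ⟨hy, hy2⟩
    · rintro (⟨hy, hneg⟩ | ⟨n, ⟨hn, hgn⟩, rfl⟩)
      · refine ⟨?_, hneg⟩
        by_contra hc
        push_neg at hc
        apply hy
        refine ⟨(-y - 1).toNat, ?_⟩
        have h2 : ((-y - 1).toNat : ℤ) = -y - 1 := Int.toNat_of_nonneg (by omega)
        rw [hN _ (by omega)]
        omega
      · have : g N < g n := hg hn
        rw [hN N le_rfl] at this
        exact ⟨by omega, hgn⟩
  have hdisj : Disjoint {y : ℤ | y ∉ Set.range g ∧ y < 0} (g '' Ac) := by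
    refine Set.disjoint_left.mpr fun y hy hy2 => ?_
    obtain ⟨n, -, rfl⟩ := hy2
    exact hy.1 (Set.mem_range_self n)
  have hGfin : {y : ℤ | y ∉ Set.range g ∧ y < 0}.Finite := by
    refine (Set.finite_Ioo (-(N:ℤ) - 1) 0).subset fun y hy => ?_
    rw [hIoo]
    exact Or.inl hy
  have hIoo_card : ((Set.Ioo (-(N : ℤ) - 1) 0).ncard : ℤ) = N := by
    have : Set.Ioo (-(N : ℤ) - 1) 0 = ↑(Finset.Ioo (-(N : ℤ) - 1) 0) := by simp
    rw [this, Set.ncard_coe_finset, Int.card_Ioo]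
    simp
  have hsplitN : A.ncard + Ac.ncard = N := by
    have hU : A ∪ Ac = Set.Iio N := by
      ext n
      simp only [Set.mem_union, hA, hAc, Set.mem_setOf_eq, Set.mem_Iio]
      constructor
      · rintro (h | h)
        · exact hAsub h
        · exact h.1
      · intro h
        by_cases h0 : 0 ≤ g n
        · exact Or.inl h0
        · exact Or.inr ⟨h, by omega⟩
    have hd : Disjoint A Ac := Set.disjoint_left.mpr fun n hn hn2 => by
      simp only [hA, Set.mem_setOf_eq] at hn
      simp only [hAc, Set.mem_setOf_eq] at hn2
      omega
    have := Set.ncard_union_eq hd hAfin hAcfin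
    rw [hU, ncard_Iio_nat] at this
    omega
  have hcard : {y : ℤ | y ∉ Set.range g ∧ y < 0}.ncard + Ac.ncard = N := by
    have h2 := Set.ncard_union_eq hdisj hGfin (hAcfin.image g)
    rw [← hIoo] at h2
    rw [Set.ncard_image_of_injective _ hg.injective] at h2
    omega
  rw [chg, hpos, Set.ncard_image_of_injective _ hg.injective]
  omega

lemma chg_beta (l : Partition') : chg (beta 0 l) = 0 := by
  rw [← range_gbeta]
  obtain ⟨N, hN⟩ := gbeta_eventually 0 l
  exact chg_of_enum (gbeta_strictAnti 0 l) (fun n hn => by rw [hN n hn]; ring)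

/-- existence: any admissible charge-0 set is the beta-set of a partition -/
lemma exists_partition (S : Set ℤ) (hS : Adm S) (h0 : chg S = 0) :
    ∃ m : Partition', beta 0 m = S := by
  obtain ⟨a, ha⟩ := hS.lo
  obtain ⟨b, hb⟩ := hS.hi
  have hstep : ∀ z : ℤ, ∃ u : ℤ, (u ∈ S ∧ u < z) ∧ ∀ y : ℤ, (y ∈ S ∧ y < z) → y ≤ u := by
    intro z
    obtain ⟨u, hu1, hu2⟩ := Int.exists_greatest_of_bdd (P := fun y => y ∈ S ∧ y < z)
      ⟨z - 1, fun y hy => by omega⟩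
      ⟨min a (z - 1), ⟨ha _ (min_le_left _ _), by omega⟩⟩
    exact ⟨u, hu1, hu2⟩
  choose step hstep1 hstep2 using hstep
  obtain ⟨top, htop1, htop2⟩ := Int.exists_greatest_of_bdd (P := fun y => y ∈ S)
    ⟨b, hb⟩ ⟨a, ha a le_rfl⟩
  set g : ℕ → ℤ := fun n => Nat.rec top (fun _ z => step z) n with hgdef
  have hgs : ∀ n, g (n + 1) = step (g n) := fun n => rfl
  have hmem : ∀ n, g n ∈ S := by
    intro n
    cases n with
    | zero => exact htop1
    | succ m => rw [hgs]; exact (hstep1 (g m)).1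
  have hanti_succ : ∀ n, g (n + 1) < g n := fun n => by rw [hgs]; exact (hstep1 (g n)).2
  have hanti : StrictAnti g := strictAnti_nat_of_succ_lt hanti_succ
  have hnext : ∀ n (y : ℤ), y ∈ S → y < g n → y ≤ g (n + 1) := fun n y hy hlt => by
    rw [hgs]; exact hstep2 _ y ⟨hy, hlt⟩
  have hlin : ∀ n k : ℕ, g (n + k) + k ≤ g n := by
    intro n k
    induction k with
    | zero => simp
    | succ m ih =>
        have := hanti_succ (n + m)
        have h2 : n + (m + 1) = (n + m) + 1 := by omega
        rw [h2]
        push_cast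
        omega
  have hrange : Set.range g = S := by
    ext x
    constructor
    · rintro ⟨n, rfl⟩; exact hmem n
    · intro hx
      have hex : ∃ n, g n ≤ x := by
        refine ⟨(top - x).toNat, ?_⟩
        have h1 := hlin 0 ((top - x).toNat)
        have h2 : ((top - x).toNat : ℤ) = top - x := Int.toNat_of_nonneg (by
          have := htop2 x hx; omega)
        simp only [Nat.zero_add] at h1
        have : g 0 = top := rfl
        omega
      have hfind := Nat.find_spec hex
      rcases hn : Nat.find hex with _ | m
      · rw [hn] at hfind
        have : x ≤ g 0 := htop2 x hx
        exact ⟨0, by omega⟩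
      · have hm : ¬ g m ≤ x := Nat.find_min hex (by omega)
        rw [hn] at hfind
        have := hnext m x hx (by omega)
        exact ⟨m + 1, by omega⟩
  have hcount : ∀ n : ℕ, (S ∩ Set.Ioi (g n)).ncard = n := by
    intro n
    have himg : S ∩ Set.Ioi (g n) = g '' (Set.Iio n) := by
      ext y
      simp only [Set.mem_inter_iff, Set.mem_Ioi, Set.mem_image, Set.mem_Iio]
      constructor
      · rintro ⟨hy, hgt⟩
        rw [← hrange] at hy
        obtain ⟨m, rfl⟩ := hy
        exact ⟨m, by by_contra hc; push_neg at hc; have := hanti.antitone hc; omega, rfl⟩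
      · rintro ⟨m, hm, rfl⟩
        exact ⟨hmem m, hanti hm⟩
    rw [himg, Set.ncard_image_of_injective _ hanti.injective, ncard_Iio_nat]
  have hcnt2 : ∀ x : ℤ, x ≤ min a (-1) → ((S ∩ Set.Ioi x).ncard : ℤ) = -x - 1 := by
    intro x hx
    have hx_a : x ≤ a := le_trans hx (min_le_left _ _)
    have hx_neg : x ≤ -1 := le_trans hx (min_le_right _ _)
    have hsplit : S ∩ Set.Ioi x = (S ∩ Set.Ioo x 0) ∪ {y : ℤ | y ∈ S ∧ 0 ≤ y} := by
      ext y
      simp only [Set.mem_inter_iff, Set.mem_Ioi, Set.mem_union, Set.mem_Ioo, Set.mem_setOf_eq]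
      constructor
      · rintro ⟨hy, hgt⟩
        rcases lt_or_ge y 0 with h | h
        · exact Or.inl ⟨hy, hgt, h⟩
        · exact Or.inr ⟨hy, h⟩
      · rintro (⟨hy, hgt, -⟩ | ⟨hy, h0⟩)
        · exact ⟨hy, hgt⟩
        · exact ⟨hy, by omega⟩
    have hd1 : Disjoint (S ∩ Set.Ioo x 0) {y : ℤ | y ∈ S ∧ 0 ≤ y} :=
      Set.disjoint_left.mpr fun y hy hy2 => by
        have := hy.2.2
        have := hy2.2
        omega
    have hIoo : Set.Ioo x (0:ℤ) = (S ∩ Set.Ioo x 0) ∪ {y : ℤ | y ∉ S ∧ y < 0} := by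
      ext y
      simp only [Set.mem_Ioo, Set.mem_union, Set.mem_inter_iff, Set.mem_setOf_eq]
      constructor
      · rintro ⟨hy1, hy2⟩
        by_cases hy : y ∈ S
        · exact Or.inl ⟨hy, hy1, hy2⟩
        · exact Or.inr ⟨hy, hy2⟩
      · rintro (⟨hy, h⟩ | ⟨hy, hneg⟩)
        · exact h
        · refine ⟨?_, hneg⟩
          by_contra hc
          exact hy (ha y (by omega))
    have hd2 : Disjoint (S ∩ Set.Ioo x 0) {y : ℤ | y ∉ S ∧ y < 0} :=
      Set.disjoint_left.mpr fun y hy hy2 => hy2.1 hy.1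
    have hfin1 : (S ∩ Set.Ioo x 0).Finite := (Set.finite_Ioo x 0).inter_of_right _
    have hIoo_card : ((Set.Ioo x (0:ℤ)).ncard : ℤ) = -x - 1 := by
      have he : Set.Ioo x (0:ℤ) = ↑(Finset.Ioo x 0) := by simp
      rw [he, Set.ncard_coe_finset, Int.card_Ioo]
      omega
    have h2 := Set.ncard_union_eq hd2 hfin1 (neg_finite hS)
    rw [← hIoo] at h2
    have h3 := Set.ncard_union_eq hd1 hfin1 (pos_finite hS)
    rw [← hsplit] at h3
    rw [chg] at h0
    omega
  have hma := min_le_left a (-1)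
  have hm1 := min_le_right a (-1)
  obtain ⟨N, hNcast⟩ : ∃ N : ℕ, (N : ℤ) = -(min a (-1)) - 1 :=
    ⟨(-(min a (-1)) - 1).toNat, Int.toNat_of_nonneg (by omega)⟩
  have hev : ∀ n : ℕ, N ≤ n → g n = -(n + 1 : ℤ) := by
    intro n hn
    have h5 : (N : ℤ) ≤ n := by exact_mod_cast hn
    have hxm0 : -(n + 1 : ℤ) ≤ min a (-1) := by omega
    have hxS : -(n + 1 : ℤ) ∈ S := ha _ (by omega)
    rw [← hrange] at hxS
    obtain ⟨n0, hn0⟩ := hxS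
    have h1 := hcount n0
    rw [hn0] at h1
    have h2 := hcnt2 _ hxm0
    rw [h1] at h2
    have h4 : n0 = n := by omega
    subst h4
    omega
  have hlow : ∀ n : ℕ, -(n + 1 : ℤ) ≤ g n := by
    intro n
    rcases le_or_gt N n with h | h
    · rw [hev n h]
    · have h1 := hlin n (N - n)
      have h2 : n + (N - n) = N := by omega
      rw [h2, hev N le_rfl] at h1
      have h3 : ((N - n : ℕ) : ℤ) = (N : ℤ) - n := by omega
      omega
  refine ⟨⟨fun n => (g n + n + 1).toNat, ?_, ?_⟩, ?_⟩
  · intro m n hmn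
    show (g n + n + 1).toNat ≤ (g m + m + 1).toNat
    apply Int.toNat_le_toNat
    have h1 := hlin m (n - m)
    have h2 : m + (n - m) = n := by omega
    rw [h2] at h1
    have : ((n - m : ℕ) : ℤ) = (n : ℤ) - m := by omega
    omega
  · refine ⟨N, fun n hn => ?_⟩
    show (g n + n + 1).toNat = 0
    rw [hev n hn]
    omega
  · ext x
    simp only [beta, Set.mem_setOf_eq, add_zero]
    rw [← hrange]
    constructor
    · rintro ⟨n, hn⟩
      refine ⟨n, ?_⟩
      have hcast : (((g n + n + 1).toNat : ℤ)) = g n + n + 1 :=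
        Int.toNat_of_nonneg (by have := hlow n; omega)
      have hn' : x = ((g n + n + 1).toNat : ℤ) - (n + 1) := hn
      show g n = x
      omega
    · rintro ⟨n, hn⟩
      refine ⟨n, ?_⟩
      have hcast : (((g n + n + 1).toNat : ℤ)) = g n + n + 1 :=
        Int.toNat_of_nonneg (by have := hlow n; omega)
      show x = ((g n + n + 1).toNat : ℤ) - (n + 1)
      omega

lemma beta_core (t : ℕ) (ht : 0 < t) (l : Partition') :
    beta 0 (core t l) = Partition'.coreBeta t (beta 0 l) := by
  obtain ⟨m, hm⟩ := exists_partition (Partition'.coreBeta t (beta 0 l))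
    (coreBeta_adm (adm_beta l) ht)
    (by rw [chg_coreBeta (adm_beta l) ht, chg_beta l])
  have : core t l = m := by
    rw [core, ← hm, ofBeta_beta]
  rw [this, hm]

end OlssonAux


open Partition' in
/-- Olsson's theorem: the `t`-core of an `s`-core is again an `s`-core. -/
theorem isCore_core_of_isCore (s t : ℕ) (hs : 0 < s) (ht : 0 < t) (hst : Nat.Coprime s t)
    (l : Partition') (h : IsCore s l) : IsCore s (core t l) := by
  have hB := OlssonAux.adm_beta l
  have hfix : Partition'.coreBeta s (beta 0 l) = beta 0 l := by
    rw [← OlssonAux.beta_core s hs l, show core s l = l from h]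
  have hcl : ∀ x ∈ beta 0 l, x - s ∈ beta 0 l := by
    intro x hx
    rw [← hfix] at hx ⊢
    exact OlssonAux.coreBeta_mem_of_mem_sub hB hs hx
  have hB' : OlssonAux.Adm (beta 0 (core t l)) := OlssonAux.adm_beta _
  have hcl' : ∀ x ∈ beta 0 (core t l), x - s ∈ beta 0 (core t l) := by
    rw [OlssonAux.beta_core t ht l]
    intro x hx
    exact OlssonAux.coreBeta_closed_of_closed hB ht hcl x hx
  show core s (core t l) = core t l
  rw [core, OlssonAux.coreBeta_eq_of_closed hB' hs hcl', OlssonAux.ofBeta_beta]
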